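/- Let a > 1 be real, δ := a − √(a² − 1), and η := −δ. For an integer m ≥ 1 define the polynomial Q_m(t) := −2/(η − η⁻¹) + (4/(η − η⁻¹)) · Σ_{j=0}^{m−1} ηʲ T_j(t) − (4 η^{m−1}/(η − η⁻¹)²) T_m(t), where T_j is the Chebyshev polynomial of the first kind of degree j. Then Q_m has degree at most m and sup over t ∈ [−1,1] of |1/(t+a) − Q_m(t)| = δᵐ / (a² − 1). In particular, Q_m is a polynomial of best uniform approximation to 1/(t+a) on [−1,1] out of the polynomials of degree at most m. -/

import Mathlib

open Complex Polynomial Polynomial.Chebyshev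

lemma cos_sum_id (x y : ℝ) : Real.cos (x+y) + Real.cos (x-y) = 2 * Real.cos x * Real.cos y := by
  rw [Real.cos_add, Real.cos_sub]; ring

-- L1: geometric-cosine sum identity
lemma sum_cos_geom (η θ : ℝ) (m : ℕ) :
    (1 - 2*η*Real.cos θ + η^2) * ∑ j ∈ Finset.range m, η^j * Real.cos (j*θ)
    = 1 - η*Real.cos θ - η^m * Real.cos (m*θ) + η^(m+1) * Real.cos (((m:ℝ)-1)*θ) := by
  induction m with
  | zero => simp
  | succ n ih =>
    rw [Finset.sum_range_succ, mul_add, ih]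
    have h1 : 2 * Real.cos ((n:ℝ)*θ) * Real.cos θ
        = Real.cos (((n:ℝ)+1)*θ) + Real.cos (((n:ℝ)-1)*θ) := by
      rw [show ((n:ℝ)+1)*θ = (n:ℝ)*θ + θ by ring, show ((n:ℝ)-1)*θ = (n:ℝ)*θ - θ by ring,
        cos_sum_id]
    have h2 : 2 * Real.cos (((n:ℝ)+1)*θ) * Real.cos θ
        = Real.cos (((n:ℝ)+1+1)*θ) + Real.cos ((n:ℝ)*θ) := by
      rw [show ((n:ℝ)+1+1)*θ = ((n:ℝ)+1)*θ + θ by ring, show (n:ℝ)*θ = ((n:ℝ)+1)*θ - θ by ring,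
        cos_sum_id]
    push_cast
    rw [show ((n:ℝ)+1-1) = (n:ℝ) by ring]
    linear_combination (-η^(n+1)) * h1

lemma err_core (a s δ c A B D S' q ε u : ℝ) (hs2 : s^2 = a^2-1) (hδ : δ = a - s)
    (hs0 : 0 < s) (hδ0 : 0 < δ) (hca : c + a ≠ 0)
    (hq : q = -1/s + 2/s * S' - ε*u/s^2 * B)
    (hS : (1+2*δ*c+δ^2) * S' = 1 + δ*c + ε*u*δ*B + ε*u*δ^2*D)
    (hA : 2*B*c = A + D) :
    1/(c+a) - q = ε*u*δ*(A+2*δ*B+δ^2*D)/(s^2*(1+2*δ*c+δ^2)) := by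
  have hP2 : 1 + δ^2 = 2*a*δ := by nlinarith [hs2]
  have hca' : 1+2*δ*c+δ^2 = 2*δ*(c+a) := by linarith [hP2]
  have h1δ : 1 - δ^2 = 2*s*δ := by nlinarith [hs2]
  have hPne : (1+2*δ*c+δ^2) ≠ 0 := by
    rw [hca']; exact mul_ne_zero (by positivity) hca
  have hsne : s ≠ 0 := ne_of_gt hs0
  have e1 : (1/(c+a)) * (s^2*(1+2*δ*c+δ^2)) = 2*δ*s^2 := by
    rw [hca']; field_simp
  have expand : (1/(c+a) - q) * (s^2*(1+2*δ*c+δ^2))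
      = 2*δ*s^2 + s*(1+2*δ*c+δ^2) - 2*s*((1+2*δ*c+δ^2)*S') + ε*u*B*(1+2*δ*c+δ^2) := by
    rw [sub_mul, e1, hq]; field_simp; ring
  have key : (1/(c+a) - q) * (s^2*(1+2*δ*c+δ^2)) = ε*u*δ*(A+2*δ*B+δ^2*D) := by
    rw [expand, hS]; linear_combination (ε*u*δ)*hA + (ε*u*(B+δ*D) - s)*h1δ
  rw [eq_div_iff (mul_ne_zero (pow_ne_zero 2 hsne) hPne), key]

noncomputable def zz (δ θ : ℝ) : ℂ := 1 + (δ:ℂ) * Complex.exp (-(θ:ℂ)*I)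
noncomputable def ee (x : ℝ) : ℂ := Complex.exp ((x:ℂ)*I)

lemma ee_re (x : ℝ) : (ee x).re = Real.cos x := by
  simp [ee, Complex.exp_ofReal_mul_I_re]

lemma zz_re (δ θ : ℝ) : (zz δ θ).re = 1 + δ * Real.cos θ := by
  simp [zz, Complex.exp_re, Complex.exp_im, Complex.cos_ofReal_re]

lemma zz_im (δ θ : ℝ) : (zz δ θ).im = -(δ * Real.sin θ) := by
  simp [zz, Complex.exp_re, Complex.exp_im]

lemma zz_normSq (δ θ : ℝ) : Complex.normSq (zz δ θ) = 1 + 2*δ*Real.cos θ + δ^2 := by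
  rw [Complex.normSq_apply, zz_re, zz_im]
  nlinarith [Real.sin_sq_add_cos_sq θ]

lemma phase (δ θ : ℝ) (w : ℝ) :
    Real.cos ((w+1)*θ) + 2*δ*Real.cos (w*θ) + δ^2*Real.cos ((w-1)*θ)
    = (1+2*δ*Real.cos θ+δ^2) *
      Real.cos ((w+1)*θ + 2*Complex.arg (zz δ θ)) := by
  have key : ee ((w+1)*θ) * (zz δ θ)^2
      = ((Complex.normSq (zz δ θ) : ℝ) : ℂ) * ee ((w+1)*θ + 2*Complex.arg (zz δ θ)) := by
    have hzpow : (zz δ θ)^2 = ((Complex.normSq (zz δ θ) : ℝ) : ℂ) *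
        Complex.exp (((2*Complex.arg (zz δ θ) : ℝ) : ℂ) * I) := by
      conv_lhs => rw [show zz δ θ = (‖zz δ θ‖ : ℂ) * Complex.exp ((Complex.arg (zz δ θ) : ℂ) * I) from (Complex.norm_mul_exp_arg_mul_I _).symm]
      rw [mul_pow, ← Complex.exp_nat_mul,
        show ((‖zz δ θ‖ : ℂ))^2 = ((Complex.normSq (zz δ θ) :ℝ) : ℂ) by
          rw [← Complex.ofReal_pow, Complex.sq_norm]]
      congr 1
      push_cast
      ring
    rw [hzpow, ee, ee]
    rw [show ((((w+1)*θ + 2*Complex.arg (zz δ θ) : ℝ)) : ℂ) * I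
        = (((w+1)*θ : ℝ) : ℂ) * I + ((2*Complex.arg (zz δ θ) : ℝ) : ℂ) * I by push_cast; ring,
      Complex.exp_add]
    ring
  have expand : ee ((w+1)*θ) * (zz δ θ)^2
      = ee ((w+1)*θ) + 2*(δ:ℂ)*ee (w*θ) + (δ:ℂ)^2 * ee ((w-1)*θ) := by
    rw [zz, show ee (w*θ) = ee ((w+1)*θ) * Complex.exp (-(θ:ℂ)*I) by
        rw [ee, ee, ← Complex.exp_add]; congr 1; push_cast; ring,
      show ee ((w-1)*θ) = ee ((w+1)*θ) * (Complex.exp (-(θ:ℂ)*I) * Complex.exp (-(θ:ℂ)*I)) by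
        rw [ee, ee, ← Complex.exp_add, ← Complex.exp_add]; congr 1; push_cast; ring]
    ring
  have := congrArg Complex.re (expand.symm.trans key)
  simpa [Complex.add_re, Complex.mul_re, Complex.ofReal_re, Complex.ofReal_im, ee_re,
    ← Complex.ofReal_pow, Complex.cos_ofReal_re, zz_normSq] using this

lemma degree_T_le : ∀ n : ℕ, (T ℝ (n:ℤ)).degree ≤ (n : ℕ)
  | 0 => by simp [T_zero]
  | 1 => by simp [T_one, degree_X_le]
  | (n+2) => by
    have h1 := degree_T_le (n+1)
    have h0 := degree_T_le n
    rw [show (((n+2:ℕ)):ℤ) = ((n:ℕ):ℤ) + 2 by push_cast; ring, T_add_two]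
    refine le_trans (degree_sub_le _ _) (max_le ?_ ?_)
    · have h2X : (2*X : ℝ[X]).degree ≤ 1 := by
        have h2 : (2 : ℝ[X]) = C 2 := by
          exact (map_ofNat Polynomial.C 2).symm
        calc (2*X : ℝ[X]).degree ≤ (2:ℝ[X]).degree + X.degree := degree_mul_le _ _
          _ ≤ 0 + 1 := add_le_add (h2 ▸ degree_C_le) degree_X_le
          _ = 1 := by norm_num
      have hT1 : (T ℝ ((n:ℤ)+1)).degree ≤ ((n+1:ℕ) : WithBot ℕ) := by
        have : ((n:ℤ)+1) = ((n+1:ℕ):ℤ) := by push_cast; ring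
        rw [this]; exact h1
      calc ((2*X*T ℝ ((n:ℤ)+1) : ℝ[X])).degree ≤ (2*X : ℝ[X]).degree + (T ℝ ((n:ℤ)+1)).degree :=
            degree_mul_le _ _
        _ ≤ 1 + ((n+1 : ℕ) : WithBot ℕ) := add_le_add h2X hT1
        _ ≤ ((n+2:ℕ) : WithBot ℕ) := by
            push_cast
            exact le_of_eq (by ring)
    · exact le_trans h0 (by exact_mod_cast Nat.le_add_right n 2)

set_option maxHeartbeats 1000000 in
theorem best_approx_inv_explicit (a : ℝ) (ha : 1 < a)
    (δ η : ℝ) (hδ : δ = a - Real.sqrt (a ^ 2 - 1)) (hη : η = -δ)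
    (m : ℕ) (hm : 1 ≤ m)
    (Qm : Polynomial ℝ)
    (hQm : Qm = C (-2 / (η - η⁻¹)) +
        C (4 / (η - η⁻¹)) * ∑ j ∈ Finset.range m, C (η ^ j) * T ℝ j -
        C (4 * η ^ (m - 1) / (η - η⁻¹) ^ 2) * T ℝ m) :
    Qm.degree ≤ (m : ℕ) ∧
    sSup ((fun t : ℝ => |1 / (t + a) - Qm.eval t|) '' Set.Icc (-1 : ℝ) 1) =
      δ ^ m / (a ^ 2 - 1) ∧
    ∀ Q : Polynomial ℝ, Q.degree ≤ (m : ℕ) →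
      sSup ((fun t : ℝ => |1 / (t + a) - Qm.eval t|) '' Set.Icc (-1 : ℝ) 1) ≤
        sSup ((fun t : ℝ => |1 / (t + a) - Q.eval t|) '' Set.Icc (-1 : ℝ) 1) := by
  obtain ⟨k, rfl⟩ : ∃ k, m = k + 1 := ⟨m - 1, (Nat.succ_pred_eq_of_pos hm).symm⟩
  -- basic setup
  set s : ℝ := Real.sqrt (a ^ 2 - 1) with hs
  have ha2 : 0 < a ^ 2 - 1 := by nlinarith
  have hs0 : 0 < s := Real.sqrt_pos.mpr ha2
  have hs2 : s ^ 2 = a ^ 2 - 1 := Real.sq_sqrt ha2.le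
  have hsne : s ≠ 0 := ne_of_gt hs0
  have hδ0 : 0 < δ := by nlinarith [hs2, hs0]
  have hδ1 : δ < 1 := by nlinarith [hs2, hs0]
  have hδne : δ ≠ 0 := ne_of_gt hδ0
  have hδinv : δ⁻¹ = a + s := by
    have h1 : δ * (a+s) = 1 := by rw [hδ]; nlinarith [hs2]
    field_simp
    linarith [h1]
  have hη1 : η - η⁻¹ = 2 * s := by
    rw [hη, inv_neg, hδinv, hδ]
    ring
  -- evaluation of Qm at cos θ
  have hQeval : ∀ θ : ℝ, Qm.eval (Real.cos θ)
      = -1/s + 2/s * (∑ j ∈ Finset.range (k+1), η^j * Real.cos (j*θ))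
        - (η^k)/s^2 * Real.cos (((k:ℝ)+1)*θ) := by
    intro θ
    rw [hQm]
    simp only [eval_add, eval_sub, eval_mul, eval_C, eval_finset_sum, T_real_cos, hη1,
      Nat.add_sub_cancel]
    push_cast
    field_simp
    ring_nf
    have hc : ∀ x : ℕ, Real.cos (θ * x) = Real.cos (x * θ) := fun x => by rw [mul_comm]
    simp only [hc]
  -- the error formula
  have hP0 : ∀ θ : ℝ, (0:ℝ) < 1 + 2*δ*Real.cos θ + δ^2 := by
    intro θ
    nlinarith [Real.neg_one_le_cos θ, Real.cos_le_one θ, sq_nonneg (1 - δ)]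
  have hca0 : ∀ θ : ℝ, (0:ℝ) < Real.cos θ + a := by
    intro θ; nlinarith [Real.neg_one_le_cos θ]
  have errθ : ∀ θ : ℝ, 1/(Real.cos θ + a) - Qm.eval (Real.cos θ)
      = (η^k*δ/s^2) * Real.cos (((k:ℝ)+1+1)*θ + 2*Complex.arg (zz δ θ)) := by
    intro θ
    have hsum := sum_cos_geom η θ (k+1)
    push_cast at hsum
    rw [show ((k:ℝ)+1-1) = (k:ℝ) by ring] at hsum
    have hp1 : η^(k+1) = η^k * η := pow_succ η k
    have hp2 : η^(k+1+1) = η^k * η^2 := by rw [pow_succ, hp1]; ring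
    have hS : (1+2*δ*Real.cos θ+δ^2) * (∑ j ∈ Finset.range (k+1), η^j * Real.cos (j*θ))
        = 1 + δ*Real.cos θ + 1*(η^k)*δ*Real.cos (((k:ℝ)+1)*θ)
          + 1*(η^k)*δ^2*Real.cos ((k:ℝ)*θ) := by
      linear_combination hsum + (Real.cos (((k:ℝ)+1)*θ))*hp1 - (Real.cos ((k:ℝ)*θ))*hp2
        + ((2*Real.cos θ + δ - η)*(∑ j ∈ Finset.range (k+1), η^j * Real.cos (j*θ))
           - Real.cos θ - η^k*Real.cos (((k:ℝ)+1)*θ) + η^k*(δ-η)*Real.cos ((k:ℝ)*θ)) * hη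
        + (2*η^k*Real.cos ((k:ℝ)*θ)*(η - δ))*hη
    have hA : 2*Real.cos (((k:ℝ)+1)*θ)*Real.cos θ
        = Real.cos (((k:ℝ)+1+1)*θ) + Real.cos ((k:ℝ)*θ) := by
      have := cos_sum_id (((k:ℝ)+1)*θ) θ
      rw [show ((k:ℝ)+1)*θ + θ = ((k:ℝ)+1+1)*θ by ring,
        show ((k:ℝ)+1)*θ - θ = (k:ℝ)*θ by ring] at this
      linarith
    have hq : Qm.eval (Real.cos θ)
        = -1/s + 2/s * (∑ j ∈ Finset.range (k+1), η^j * Real.cos (j*θ))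
          - 1*(η^k)/s^2 * Real.cos (((k:ℝ)+1)*θ) := by
      rw [hQeval θ]; ring
    have hcore := err_core a s δ (Real.cos θ) (Real.cos (((k:ℝ)+1+1)*θ))
      (Real.cos (((k:ℝ)+1)*θ)) (Real.cos ((k:ℝ)*θ))
      (∑ j ∈ Finset.range (k+1), η^j * Real.cos (j*θ)) (Qm.eval (Real.cos θ))
      1 (η^k) hs2 hδ hs0 hδ0 (ne_of_gt (hca0 θ)) hq hS hA
    have hph := phase δ θ ((k:ℝ)+1)
    rw [show ((k:ℝ)+1-1) = (k:ℝ) by ring] at hph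
    rw [hcore, hph]
    have hPne := ne_of_gt (hP0 θ)
    rw [eq_comm, div_mul_eq_mul_div, div_eq_div_iff (pow_ne_zero 2 hsne) (mul_ne_zero (pow_ne_zero 2 hsne) hPne)]
    ring
  -- the extremal value
  set E : ℝ := δ^(k+1)/(a^2-1) with hE
  have hE0 : 0 < E := by positivity
  have hconst : |η^k*δ/s^2| = E := by
    rw [hη, hE, ← hs2, abs_div, abs_mul, _root_.abs_pow, abs_neg, abs_of_pos hδ0,
      abs_of_pos (by positivity : (0:ℝ) < s^2), pow_succ]
    ring
  -- upper bound on the error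
  have habs : ∀ t ∈ Set.Icc (-1:ℝ) 1, |1/(t+a) - Qm.eval t| ≤ E := by
    intro t ht
    rw [← Real.cos_arccos ht.1 ht.2, errθ (Real.arccos t), abs_mul]
    calc |η^k*δ/s^2| * |Real.cos (((k:ℝ)+1+1)*(Real.arccos t)
          + 2*Complex.arg (zz δ (Real.arccos t)))|
        ≤ |η^k*δ/s^2| * 1 := by
          gcongr
          exact Real.abs_cos_le_one _
      _ = E := by rw [mul_one, hconst]
  -- the error at the endpoint t = 1
  have hzz0 : Complex.arg (zz δ 0) = 0 := by
    have : zz δ 0 = ((1+δ:ℝ):ℂ) := by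
      rw [zz]
      push_cast
      simp
    rw [this, Complex.arg_ofReal_of_nonneg (by linarith)]
  have hatt : |1/((1:ℝ)+a) - Qm.eval 1| = E := by
    have h := errθ 0
    rw [Real.cos_zero] at h
    rw [h, mul_zero, zero_add, hzz0, mul_zero, Real.cos_zero, mul_one, hconst]
  -- part 2 : the sup
  have hsup2 : sSup ((fun t : ℝ => |1 / (t + a) - Qm.eval t|) '' Set.Icc (-1 : ℝ) 1) = E := by
    apply IsGreatest.csSup_eq
    constructor
    · exact ⟨1, by norm_num, by simpa using hatt⟩
    · rintro y ⟨t, ht, rfl⟩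
      simpa using habs t ht
  -- part 1 : degree bound
  have hdegT : ∀ n : ℕ, n ≤ k+1 → (T ℝ (n:ℤ)).degree ≤ ((k+1:ℕ) : WithBot ℕ) :=
    fun n hn => le_trans (degree_T_le n) (by exact_mod_cast hn)
  have hzero_le : ((0:WithBot ℕ)) ≤ ((k+1:ℕ) : WithBot ℕ) := by
    exact_mod_cast Nat.zero_le (k+1)
  have hdeg : Qm.degree ≤ ((k+1:ℕ) : WithBot ℕ) := by
    rw [hQm]
    refine le_trans (degree_sub_le _ _) (max_le (le_trans (degree_add_le _ _) (max_le ?_ ?_)) ?_)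
    · exact le_trans degree_C_le hzero_le
    · refine le_trans (degree_mul_le _ _) ?_
      have h1 : (∑ j ∈ Finset.range (k+1), C (η ^ j) * T ℝ (j:ℤ)).degree
          ≤ ((k+1:ℕ) : WithBot ℕ) := by
        refine le_trans (degree_sum_le _ _) (Finset.sup_le ?_)
        intro j hj
        refine le_trans (degree_mul_le _ _) ?_
        calc (C (η^j)).degree + (T ℝ (j:ℤ)).degree ≤ 0 + ((k+1:ℕ) : WithBot ℕ) :=
              add_le_add degree_C_le (hdegT j (by have := Finset.mem_range.mp hj; omega))
          _ = ((k+1:ℕ) : WithBot ℕ) := zero_add _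
      calc (C (4 / (η - η⁻¹))).degree + (∑ j ∈ Finset.range (k+1), C (η ^ j) * T ℝ (j:ℤ)).degree
          ≤ 0 + ((k+1:ℕ) : WithBot ℕ) := add_le_add degree_C_le h1
        _ = ((k+1:ℕ) : WithBot ℕ) := zero_add _
    · refine le_trans (degree_mul_le _ _) ?_
      calc (C (4 * η ^ (k+1-1) / (η - η⁻¹) ^ 2)).degree + (T ℝ ((k+1:ℕ):ℤ)).degree
          ≤ 0 + ((k+1:ℕ) : WithBot ℕ) := add_le_add degree_C_le (hdegT (k+1) le_rfl)
        _ = ((k+1:ℕ) : WithBot ℕ) := zero_add _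
  refine ⟨hdeg, hsup2, ?_⟩
  -- part 3 : optimality
  intro Q hQdeg
  rw [hsup2]
  by_contra hcon
  push_neg at hcon
  -- continuity of ψ
  set ψ : ℝ → ℝ := fun θ => ((k:ℝ)+1+1)*θ + 2*Complex.arg (zz δ θ) with hψdef
  have hzzcont : Continuous fun θ : ℝ => zz δ θ := by
    unfold zz
    fun_prop
  have hargcont : Continuous fun θ : ℝ => Complex.arg (zz δ θ) := by
    rw [continuous_iff_continuousAt]
    intro θ
    refine (Complex.continuousAt_arg ?_).comp hzzcont.continuousAt
    refine Complex.mem_slitPlane_iff.mpr (Or.inl ?_)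
    rw [zz_re]
    nlinarith [Real.neg_one_le_cos θ]
  have hψcont : Continuous ψ := by
    apply Continuous.add
    · fun_prop
    · exact continuous_const.mul hargcont
  have hψ0 : ψ 0 = 0 := by
    simp only [hψdef, mul_zero, hzz0]
    ring
  have hψπ : ψ Real.pi = ((k:ℝ)+1+1)*Real.pi := by
    have hzzπ : Complex.arg (zz δ Real.pi) = 0 := by
      have : zz δ Real.pi = ((1-δ:ℝ):ℂ) := by
        rw [zz]
        rw [show (-(Real.pi:ℂ)*Complex.I) = -(Real.pi*Complex.I) by ring, Complex.exp_neg,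
          Complex.exp_pi_mul_I]
        push_cast
        ring_nf
      rw [this, Complex.arg_ofReal_of_nonneg (by linarith)]
    simp only [hψdef, hzzπ]
    ring
  -- the alternation points
  set S : ℕ → Set ℝ := fun i => {θ : ℝ | θ ∈ Set.Icc 0 Real.pi ∧ (i:ℝ)*Real.pi ≤ ψ θ}
    with hSdef
  have hSclosed : ∀ i, IsClosed (S i) := fun i =>
    IsClosed.inter isClosed_Icc (isClosed_le continuous_const hψcont)
  have hSne : ∀ i : ℕ, i ≤ k+2 → Real.pi ∈ S i := by
    intro i hi
    refine ⟨⟨Real.pi_pos.le, le_refl _⟩, ?_⟩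
    rw [hψπ]
    have : (i:ℝ) ≤ (k:ℝ)+1+1 := by exact_mod_cast hi
    nlinarith [Real.pi_pos]
  have hSbdd : ∀ i, BddBelow (S i) := fun i => ⟨0, fun x hx => hx.1.1⟩
  set θs : ℕ → ℝ := fun i => sInf (S i) with hθsdef
  have hmem : ∀ i : ℕ, i ≤ k+2 → θs i ∈ S i := fun i hi =>
    (hSclosed i).csInf_mem ⟨_, hSne i hi⟩ (hSbdd i)
  have hval : ∀ i : ℕ, i ≤ k+2 → ψ (θs i) = (i:ℝ)*Real.pi := by
    intro i hi
    have h1 : (i:ℝ)*Real.pi ≤ ψ (θs i) := (hmem i hi).2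
    have hIcc := (hmem i hi).1
    have hmemIcc : (i:ℝ)*Real.pi ∈ Set.Icc (ψ 0) (ψ (θs i)) := by
      refine ⟨?_, h1⟩
      rw [hψ0]
      positivity
    obtain ⟨θ', hθ'mem, hθ'val⟩ := intermediate_value_Icc hIcc.1 hψcont.continuousOn hmemIcc
    have hle1 : θs i ≤ θ' :=
      csInf_le (hSbdd i) ⟨⟨hθ'mem.1, hθ'mem.2.trans hIcc.2⟩, le_of_eq hθ'val.symm⟩
    have : θ' = θs i := le_antisymm hθ'mem.2 hle1
    rw [← this, hθ'val]
  have hmono : ∀ i j : ℕ, i < j → j ≤ k+2 → θs i < θs j := by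
    intro i j hij hj
    have hle : θs i ≤ θs j := by
      apply csInf_le_csInf (hSbdd i) ⟨_, hSne j hj⟩
      intro x hx
      refine ⟨hx.1, le_trans ?_ hx.2⟩
      have : (i:ℝ) ≤ (j:ℝ) := by exact_mod_cast hij.le
      nlinarith [Real.pi_pos]
    have hne : θs i ≠ θs j := by
      intro heq
      have := hval i (by omega)
      rw [heq, hval j hj] at this
      have : (i:ℝ) = (j:ℝ) := by
        have hπ := Real.pi_ne_zero
        field_simp at this
        tauto
      exact absurd (by exact_mod_cast this) (Nat.ne_of_lt hij)
    exact lt_of_le_of_ne hle hne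
  -- error at alternation points
  have hcosπ : ∀ i : ℕ, Real.cos ((i:ℝ)*Real.pi) = (-1:ℝ)^i := by
    intro i
    have := Real.cos_add_int_mul_pi 0 (i:ℤ)
    push_cast at this
    simpa using this
  have errval : ∀ i : ℕ, i ≤ k+2 →
      1/(Real.cos (θs i) + a) - Qm.eval (Real.cos (θs i)) = (-1:ℝ)^(k+i)*E := by
    intro i hi
    rw [errθ (θs i)]
    have : ((k:ℝ)+1+1)*(θs i) + 2*Complex.arg (zz δ (θs i)) = ψ (θs i) := rfl
    rw [this, hval i hi, hcosπ i]
    rw [hη, hE]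
    rw [← hs2]
    rw [neg_pow, pow_add]
    field_simp
    ring
  -- bounds for the competitor
  have htmem : ∀ i : ℕ, Real.cos (θs i) ∈ Set.Icc (-1:ℝ) 1 :=
    fun i => ⟨Real.neg_one_le_cos _, Real.cos_le_one _⟩
  have hQcont : ContinuousOn (fun t : ℝ => |1/(t+a) - Q.eval t|) (Set.Icc (-1:ℝ) 1) := by
    apply ContinuousOn.abs
    apply ContinuousOn.sub
    · apply ContinuousOn.div continuousOn_const (by fun_prop)
      intro t ht
      have := ht.1
      intro h0
      nlinarith
    · exact (Polynomial.continuous Q).continuousOn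
  have hbddQ : BddAbove ((fun t : ℝ => |1/(t+a) - Q.eval t|) '' Set.Icc (-1:ℝ) 1) :=
    (isCompact_Icc.image_of_continuousOn hQcont).bddAbove
  have hlt : ∀ t ∈ Set.Icc (-1:ℝ) 1, |1/(t+a) - Q.eval t| < E := by
    intro t ht
    calc |1/(t+a) - Q.eval t|
        ≤ sSup ((fun t : ℝ => |1/(t+a) - Q.eval t|) '' Set.Icc (-1:ℝ) 1) :=
          le_csSup hbddQ (Set.mem_image_of_mem _ ht)
      _ < E := by simpa using hcon
  -- sign alternation of r = Qm - Q
  set r : Polynomial ℝ := Qm - Q with hrdef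
  have hsign : ∀ i : ℕ, i ≤ k+2 → (-1:ℝ)^(k+i) * r.eval (Real.cos (θs i)) < 0 := by
    intro i hi
    have h1 := errval i hi
    have h2 := hlt (Real.cos (θs i)) (htmem i)
    have hreval : r.eval (Real.cos (θs i))
        = (1/(Real.cos (θs i)+a) - Q.eval (Real.cos (θs i)))
          - (1/(Real.cos (θs i)+a) - Qm.eval (Real.cos (θs i))) := by
      simp [hrdef]
    rw [hreval, h1]
    have habs2 : (-1:ℝ)^(k+i) * (1/(Real.cos (θs i)+a) - Q.eval (Real.cos (θs i)))
        ≤ |1/(Real.cos (θs i)+a) - Q.eval (Real.cos (θs i))| := by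
      rcases Nat.even_or_odd (k+i) with he | ho
      · rw [he.neg_one_pow, one_mul]; exact le_abs_self _
      · rw [ho.neg_one_pow]
        rw [neg_one_mul]
        exact neg_le_abs _
    have hsq : (-1:ℝ)^(k+i) * ((-1:ℝ)^(k+i)*E) = E := by
      rw [← mul_assoc, ← pow_add, Even.neg_one_pow ⟨k+i, by ring⟩, one_mul]
    calc (-1:ℝ)^(k+i) * ((1/(Real.cos (θs i)+a) - Q.eval (Real.cos (θs i))) - (-1:ℝ)^(k+i)*E)
        = (-1:ℝ)^(k+i) * (1/(Real.cos (θs i)+a) - Q.eval (Real.cos (θs i))) - E := by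
          rw [mul_sub, hsq]
      _ < 0 := by linarith [lt_of_le_of_lt habs2 h2]
  -- roots of r between consecutive alternation points
  have hroot : ∀ i : ℕ, i ≤ k+1 → ∃ x, x ∈ Set.Ioo (Real.cos (θs (i+1))) (Real.cos (θs i))
      ∧ r.eval x = 0 := by
    intro i hi
    have hlt2 : Real.cos (θs (i+1)) < Real.cos (θs i) := by
      exact Real.strictAntiOn_cos (hmem i (by omega)).1 (hmem (i+1) (by omega)).1
        (hmono i (i+1) (by omega) (by omega))
    have hsi := hsign i (by omega)
    have hsi1 := hsign (i+1) (by omega)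
    have hcont : ContinuousOn (fun x => r.eval x)
        (Set.Icc (Real.cos (θs (i+1))) (Real.cos (θs i))) :=
      (Polynomial.continuous r).continuousOn
    rcases Nat.even_or_odd (k+i) with he | ho
    · -- (-1)^(k+i) = 1 : r(t_i) < 0, r(t_{i+1}) > 0
      have h1 : r.eval (Real.cos (θs i)) < 0 := by
        rw [he.neg_one_pow, one_mul] at hsi; exact hsi
      have h2 : 0 < r.eval (Real.cos (θs (i+1))) := by
        have ho1 : Odd (k+(i+1)) := by
          rcases he with ⟨c, hc⟩; exact ⟨c, by omega⟩
        rw [ho1.neg_one_pow, neg_one_mul] at hsi1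
        linarith
      obtain ⟨x, hx, hx0⟩ := intermediate_value_Ioo' hlt2.le hcont
        (Set.mem_Ioo.mpr ⟨h1, h2⟩)
      exact ⟨x, hx, hx0⟩
    · have h1 : 0 < r.eval (Real.cos (θs i)) := by
        rw [ho.neg_one_pow, neg_one_mul] at hsi
        linarith
      have h2 : r.eval (Real.cos (θs (i+1))) < 0 := by
        have he1 : Even (k+(i+1)) := by
          rcases ho with ⟨c, hc⟩; exact ⟨c+1, by omega⟩
        rw [he1.neg_one_pow, one_mul] at hsi1
        exact hsi1
      obtain ⟨x, hx, hx0⟩ := intermediate_value_Ioo hlt2.le hcont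
        (Set.mem_Ioo.mpr ⟨h2, h1⟩)
      exact ⟨x, hx, hx0⟩
  -- choose the roots
  choose x hx hx0 using fun i : Fin (k+2) => hroot i (by omega)
  have hxanti : ∀ i j : Fin (k+2), (i:ℕ) < (j:ℕ) → x j < x i := by
    intro i j hlt3
    have h1 : x j < Real.cos (θs (j:ℕ)) := (hx j).2
    have h2 : Real.cos (θs ((i:ℕ)+1)) < x i := (hx i).1
    have h3 : Real.cos (θs (j:ℕ)) ≤ Real.cos (θs ((i:ℕ)+1)) := by
      have h5 : (i:ℕ)+1 ≤ (j:ℕ) := hlt3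
      rcases eq_or_lt_of_le h5 with heq | hlt4
      · rw [heq]
      · apply le_of_lt
        exact Real.strictAntiOn_cos (hmem ((i:ℕ)+1) (by omega)).1 (hmem (j:ℕ) (by omega)).1
          (hmono ((i:ℕ)+1) (j:ℕ) hlt4 (by omega))
    linarith
  have hxinj : Function.Injective x := by
    intro i j hij
    by_contra hne
    have hne2 : (i:ℕ) ≠ (j:ℕ) := fun h => hne (Fin.ext h)
    rcases Nat.lt_or_ge (i:ℕ) (j:ℕ) with h | h
    · have := hxanti i j h
      rw [hij] at this
      exact lt_irrefl _ this
    · have := hxanti j i (by omega)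
      rw [hij] at this
      exact lt_irrefl _ this
  have hrdeg : r.natDegree < Fintype.card (Fin (k+2)) := by
    rw [Fintype.card_fin]
    have : r.degree ≤ ((k+1:ℕ) : WithBot ℕ) :=
      le_trans (degree_sub_le _ _) (max_le hdeg hQdeg)
    have := Polynomial.natDegree_le_of_degree_le this
    omega
  have hr0 : r = 0 :=
    Polynomial.eq_zero_of_natDegree_lt_card_of_eval_eq_zero r hxinj hx0 hrdeg
  have hQeq : Qm = Q := by
    have := sub_eq_zero.mp hr0
    exact this
  rw [← hQeq] at hcon
  rw [hsup2] at hcon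
  exact absurd hcon (lt_irrefl E)
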